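/- arXiv:2109.00923 — 4 statements merged into one kernel-verified Lean document; each statement's English description precedes it below -/
import Mathlib

section
/- Strict data processing inequality: if (X,Y) on a finite space is stochastically relevant (for any distinct y, y' ∈ Y, P(X|y) ≠ P(X|y')) and has full support, and θ: Y → Y is a random function independent of (X,Y) that is not an injective (deterministic) map, then I(X; θ(Y)) < I(X; Y). -/
/-- Shannon mutual information `I(X;Y)` of a joint distribution `p` on `X × Y`. -/
noncomputable def mutualInfo {X Y : Type} [Fintype X] [Fintype Y] (p : X × Y → ℝ) : ℝ :=
  ∑ x, ∑ y, p (x, y) *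
    Real.log (p (x, y) / ((∑ y', p (x, y')) * (∑ x', p (x', y))))

/-- Elementary KL-term inequality: `a - b ≤ a log(a/b)`. -/
lemma klterm_le {a b : ℝ} (ha : 0 ≤ a) (hb : 0 ≤ b) (hab : a ≠ 0 → b ≠ 0) :
    a - b ≤ a * Real.log (a / b) := by
  rcases eq_or_lt_of_le ha with h | h
  · simp [← h]; linarith
  · have hb' : 0 < b := lt_of_le_of_ne hb (Ne.symm (hab (ne_of_gt h)))
    have hlog : Real.log (b / a) ≤ b / a - 1 :=
      Real.log_le_sub_one_of_pos (div_pos hb' h)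
    have hlog2 : Real.log (b / a) = - Real.log (a / b) := by
      rw [Real.log_div (ne_of_gt hb') (ne_of_gt h), Real.log_div (ne_of_gt h) (ne_of_gt hb')]
      ring
    rw [hlog2] at hlog
    have : 1 - b / a ≤ Real.log (a / b) := by linarith
    calc a - b = a * (1 - b / a) := by field_simp
    _ ≤ a * Real.log (a / b) := by
        exact mul_le_mul_of_nonneg_left this (le_of_lt h)

/-- Strict KL-term inequality: if `a ≠ b` then `a - b < a log(a/b)`. -/
lemma klterm_lt {a b : ℝ} (ha : 0 ≤ a) (hb : 0 ≤ b) (hab : a ≠ 0 → b ≠ 0)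
    (hne : a ≠ b) : a - b < a * Real.log (a / b) := by
  rcases eq_or_lt_of_le ha with h | h
  · have hb' : 0 < b := lt_of_le_of_ne hb (by rw [← h] at hne; exact fun hc => hne hc)
    simp [← h]; linarith
  · have hb' : 0 < b := lt_of_le_of_ne hb (Ne.symm (hab (ne_of_gt h)))
    have hba : b / a ≠ 1 := by
      intro hc
      exact hne (by field_simp at hc; linarith)
    have hlog : Real.log (b / a) < b / a - 1 :=
      Real.log_lt_sub_one_of_pos (div_pos hb' h) hba
    have hlog2 : Real.log (b / a) = - Real.log (a / b) := by
      rw [Real.log_div (ne_of_gt hb') (ne_of_gt h), Real.log_div (ne_of_gt h) (ne_of_gt hb')]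
      ring
    rw [hlog2] at hlog
    have : 1 - b / a < Real.log (a / b) := by linarith
    calc a - b = a * (1 - b / a) := by field_simp
    _ < a * Real.log (a / b) := by
        exact (mul_lt_mul_iff_right₀ h).mpr this

/-- **Strict data processing inequality.**
If `(X,Y)` has a full-support joint distribution `p` on a finite space, is
stochastically relevant (distinct values of `Y` induce distinct conditional
distributions `P(X|y)`), and `θ` is a random function `Y → Y` (a channel with
randomness independent of `(X,Y)`) which is *not* an injective deterministic map,
then `I(X; θ(Y)) < I(X; Y)`. -/
theorem strict_data_processing_inequality (X Y : Type) [Fintype X] [Fintype Y]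
    [DecidableEq Y]
    (p : X × Y → ℝ) (hpos : ∀ w, 0 < p w) (hsum : ∑ w, p w = 1)
    (hrel : ∀ y y' : Y, y ≠ y' →
      (fun x => p (x, y) / ∑ x', p (x', y)) ≠ (fun x => p (x, y') / ∑ x', p (x', y')))
    (θ : Y → Y → ℝ) (hθ0 : ∀ y y', 0 ≤ θ y y') (hθ1 : ∀ y, ∑ y', θ y y' = 1)
    (hnoninj : ¬ ∃ f : Y → Y, Function.Injective f ∧
      ∀ y y', θ y y' = if y' = f y then 1 else 0) :
    mutualInfo (fun w : X × Y => ∑ y, p (w.1, y) * θ y w.2) < mutualInfo p := by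
  classical
  -- nonemptiness
  have hne : Nonempty (X × Y) := by
    by_contra h
    rw [not_nonempty_iff] at h
    rw [Finset.univ_eq_empty, Finset.sum_empty] at hsum
    norm_num at hsum
  have hneX : Nonempty X := ⟨hne.some.1⟩
  have hneY : Nonempty Y := ⟨hne.some.2⟩
  -- marginals and pushforward
  set pX : X → ℝ := fun x => ∑ y, p (x, y) with hpXdef
  set pY : Y → ℝ := fun y => ∑ x, p (x, y) with hpYdef
  set q : X → Y → ℝ := fun x z => ∑ y, p (x, y) * θ y z with hqdef
  set qZ : Y → ℝ := fun z => ∑ y, pY y * θ y z with hqZdef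
  have hpXpos : ∀ x, 0 < pX x := fun x =>
    Finset.sum_pos (fun y _ => hpos _) Finset.univ_nonempty
  have hpYpos : ∀ y, 0 < pY y := fun y =>
    Finset.sum_pos (fun x _ => hpos _) Finset.univ_nonempty
  have hq0 : ∀ x z, 0 ≤ q x z := fun x z =>
    Finset.sum_nonneg fun y _ => mul_nonneg (le_of_lt (hpos _)) (hθ0 y z)
  have hqZ0 : ∀ z, 0 ≤ qZ z := fun z =>
    Finset.sum_nonneg fun y _ => mul_nonneg (le_of_lt (hpYpos y)) (hθ0 y z)
  have hqpos : ∀ x y z, 0 < θ y z → 0 < q x z := by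
    intro x y z hθ
    refine Finset.sum_pos' (fun y' _ => mul_nonneg (le_of_lt (hpos _)) (hθ0 y' z)) ?_
    exact ⟨y, Finset.mem_univ y, mul_pos (hpos _) hθ⟩
  have hqZpos : ∀ y z, 0 < θ y z → 0 < qZ z := by
    intro y z hθ
    refine Finset.sum_pos' (fun y' _ => mul_nonneg (le_of_lt (hpYpos y')) (hθ0 y' z)) ?_
    exact ⟨y, Finset.mem_univ y, mul_pos (hpYpos y) hθ⟩
  -- sum identities
  have hsum_q_z : ∀ x, ∑ z, q x z = pX x := by
    intro x
    rw [hqdef, hpXdef]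
    rw [Finset.sum_comm]
    exact Finset.sum_congr rfl fun y _ => by rw [← Finset.mul_sum, hθ1, mul_one]
  have hsum_q_x : ∀ z, ∑ x, q x z = qZ z := by
    intro z
    rw [hqdef, hqZdef]
    rw [Finset.sum_comm]
    exact Finset.sum_congr rfl fun y _ => by rw [← Finset.sum_mul, hpYdef]
  have hsum_pY : ∑ y, pY y = 1 := by
    rw [hpYdef, Finset.sum_comm]
    rw [Fintype.sum_prod_type] at hsum
    exact hsum
  have hsum_qZ : ∑ z, qZ z = 1 := by
    rw [hqZdef, Finset.sum_comm]
    calc ∑ y, ∑ z, pY y * θ y z = ∑ y, pY y := by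
          exact Finset.sum_congr rfl fun y _ => by rw [← Finset.mul_sum, hθ1, mul_one]
    _ = 1 := hsum_pY
  -- the two key functions
  set F : X → Y → Y → ℝ := fun x y z => p (x, y) * θ y z with hFdef
  set G : X → Y → Y → ℝ := fun x y z => q x z * pY y * θ y z / qZ z with hGdef
  have hF0 : ∀ x y z, 0 ≤ F x y z := fun x y z =>
    mul_nonneg (le_of_lt (hpos _)) (hθ0 y z)
  have hG0 : ∀ x y z, 0 ≤ G x y z := fun x y z =>
    div_nonneg (mul_nonneg (mul_nonneg (hq0 x z) (le_of_lt (hpYpos y))) (hθ0 y z)) (hqZ0 z)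
  have hFG : ∀ x y z, F x y z ≠ 0 → G x y z ≠ 0 := by
    intro x y z hF
    have hθ : 0 < θ y z := by
      rcases lt_or_eq_of_le (hθ0 y z) with h | h
      · exact h
      · exact absurd (by rw [hFdef]; simp [← h]) hF
    have := mul_pos (mul_pos (hqpos x y z hθ) (hpYpos y)) hθ
    exact ne_of_gt (div_pos this (hqZpos y z hθ))
  
  -- rewriting the two mutual informations
  have hA : mutualInfo p = ∑ x, ∑ y, ∑ z, F x y z * Real.log (p (x, y) / (pX x * pY y)) := by
    have hA0 : mutualInfo p = ∑ x, ∑ y, p (x, y) * Real.log (p (x, y) / (pX x * pY y)) := rfl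
    rw [hA0]
    refine Finset.sum_congr rfl fun x _ => Finset.sum_congr rfl fun y _ => ?_
    rw [← Finset.sum_mul]
    congr 1
    simp only [hFdef]
    rw [← Finset.mul_sum, hθ1, mul_one]
  have hB : mutualInfo (fun w : X × Y => ∑ y, p (w.1, y) * θ y w.2)
      = ∑ x, ∑ y, ∑ z, F x y z * Real.log (q x z / (pX x * qZ z)) := by
    have hB0 : mutualInfo (fun w : X × Y => ∑ y, p (w.1, y) * θ y w.2)
        = ∑ x, ∑ z, q x z * Real.log (q x z / ((∑ z', q x z') * (∑ x', q x' z))) := rfl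
    rw [hB0]
    refine Finset.sum_congr rfl fun x _ => ?_
    have swap : ∑ y, ∑ z, F x y z * Real.log (q x z / (pX x * qZ z))
        = ∑ z, ∑ y, F x y z * Real.log (q x z / (pX x * qZ z)) := Finset.sum_comm
    rw [swap]
    refine Finset.sum_congr rfl fun z _ => ?_
    rw [hsum_q_z x, hsum_q_x z, ← Finset.sum_mul]
  -- termwise log identity
  have hterm : ∀ x y z, F x y z * Real.log (p (x, y) / (pX x * pY y))
      - F x y z * Real.log (q x z / (pX x * qZ z))
      = F x y z * Real.log (F x y z / G x y z) := by
    intro x y z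
    rcases eq_or_lt_of_le (hθ0 y z) with h | h
    · simp [hFdef, ← h]
    · have hp := hpos (x, y)
      have hpx := hpXpos x
      have hpy := hpYpos y
      have hq := hqpos x y z h
      have hqz := hqZpos y z h
      rw [← mul_sub]
      congr 1
      rw [← Real.log_div (ne_of_gt (div_pos hp (mul_pos hpx hpy)))
        (ne_of_gt (div_pos hq (mul_pos hpx hqz)))]
      congr 1
      simp only [hFdef, hGdef]
      field_simp
  -- total sums of F and G
  have hFsum : ∑ x, ∑ y, ∑ z, F x y z = 1 := by
    have e : ∀ (x : X) (y : Y), ∑ z, F x y z = p (x, y) := by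
      intro x y
      simp only [hFdef]
      rw [← Finset.mul_sum, hθ1, mul_one]
    simp only [e]
    rw [Fintype.sum_prod_type] at hsum
    exact hsum
  have hGsum : ∑ x, ∑ y, ∑ z, G x y z = 1 := by
    have hz : ∀ z, ∑ x, ∑ y, G x y z = qZ z := by
      intro z
      by_cases h : qZ z = 0
      · have hθz : ∀ y, θ y z = 0 := by
          intro y
          have h' : ∑ y', pY y' * θ y' z = 0 := h
          have h0 := (Finset.sum_eq_zero_iff_of_nonneg
            (fun y' _ => mul_nonneg (le_of_lt (hpYpos y')) (hθ0 y' z))).mp h' y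
            (Finset.mem_univ y)
          rcases mul_eq_zero.mp h0 with h1 | h1
          · exact absurd h1 (ne_of_gt (hpYpos y))
          · exact h1
        simp [hGdef, hθz, h]
      · calc ∑ x, ∑ y, G x y z = (∑ x, q x z) * (∑ y, pY y * θ y z) / qZ z := by
              simp only [hGdef]
              rw [Finset.sum_mul, Finset.sum_div]
              refine Finset.sum_congr rfl fun x _ => ?_
              rw [Finset.mul_sum, Finset.sum_div]
              exact Finset.sum_congr rfl fun y _ => by rw [mul_assoc]
        _ = qZ z * qZ z / qZ z := by
              rw [hsum_q_x z]
        _ = qZ z := by field_simp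
    calc ∑ x, ∑ y, ∑ z, G x y z
        = ∑ x, ∑ z, ∑ y, G x y z :=
          Finset.sum_congr rfl fun x _ => Finset.sum_comm
      _ = ∑ z, ∑ x, ∑ y, G x y z := Finset.sum_comm
      _ = ∑ z, qZ z := Finset.sum_congr rfl fun z _ => hz z
      _ = 1 := hsum_qZ
  -- difference identity
  have hdiff : mutualInfo p - mutualInfo (fun w : X × Y => ∑ y, p (w.1, y) * θ y w.2)
      = ∑ x, ∑ y, ∑ z, F x y z * Real.log (F x y z / G x y z) := by
    rw [hA, hB]
    rw [← Finset.sum_sub_distrib]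
    refine Finset.sum_congr rfl fun x _ => ?_
    rw [← Finset.sum_sub_distrib]
    refine Finset.sum_congr rfl fun y _ => ?_
    rw [← Finset.sum_sub_distrib]
    exact Finset.sum_congr rfl fun z _ => hterm x y z
  -- existence of a strict term
  have hexists : ∃ w : X × Y × Y, F w.1 w.2.1 w.2.2 ≠ G w.1 w.2.1 w.2.2 := by
    by_contra hcon
    push_neg at hcon
    apply hnoninj
    have huniq : ∀ z y y', θ y z ≠ 0 → θ y' z ≠ 0 → y = y' := by
      intro z y y' hy hy'
      by_contra hne'
      apply hrel y y' hne'
      funext x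
      have key : ∀ yy : Y, θ yy z ≠ 0 → p (x, yy) / pY yy = q x z / qZ z := by
        intro yy hyy
        have hθp : 0 < θ yy z := lt_of_le_of_ne (hθ0 yy z) (Ne.symm hyy)
        have hqz := hqZpos yy z hθp
        have e := hcon (x, (yy, z))
        simp only [hFdef, hGdef] at e
        have e2 : p (x, yy) * qZ z = q x z * pY yy := by
          apply mul_right_cancel₀ (ne_of_gt hθp)
          field_simp at e
          rw [e]
        rw [div_eq_div_iff (ne_of_gt (hpYpos yy)) (ne_of_gt hqz)]
        linarith [e2]
      show p (x, y) / pY y = p (x, y') / pY y'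
      rw [key y hy, key y' hy']
    have hex : ∀ y, ∃ z, θ y z ≠ 0 := by
      intro y
      by_contra hc
      push_neg at hc
      have h1 := hθ1 y
      rw [Finset.sum_eq_zero (fun z _ => hc z)] at h1
      norm_num at h1
    choose f hf using hex
    have hfinj : Function.Injective f := by
      intro y y' hyy
      exact huniq (f y) y y' (hf y) (by rw [hyy]; exact hf y')
    have hfsurj : Function.Surjective f := Finite.injective_iff_surjective.mp hfinj
    refine ⟨f, hfinj, ?_⟩
    have hzero : ∀ y z, z ≠ f y → θ y z = 0 := by
      intro y z hz
      by_contra hc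
      obtain ⟨y'', hy''⟩ := hfsurj z
      have hyy'' : y = y'' := huniq z y y'' hc (by rw [← hy'']; exact hf y'')
      exact hz (by rw [hyy'', hy''])
    intro y y'
    by_cases h : y' = f y
    · subst h
      have h1 := hθ1 y
      rw [Finset.sum_eq_single (f y) (fun b _ hb => hzero y b hb)
        (fun hmem => absurd (Finset.mem_univ _) hmem)] at h1
      simp [h1]
    · simp [h, hzero y y' h]
  -- assemble the strict inequality
  obtain ⟨w0, hw0⟩ := hexists
  have hsumlt : (∑ w : X × Y × Y, (F w.1 w.2.1 w.2.2 - G w.1 w.2.1 w.2.2))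
      < ∑ w : X × Y × Y, F w.1 w.2.1 w.2.2 * Real.log (F w.1 w.2.1 w.2.2 / G w.1 w.2.1 w.2.2) := by
    refine Finset.sum_lt_sum
      (fun w _ => klterm_le (hF0 _ _ _) (hG0 _ _ _) (hFG _ _ _)) ?_
    exact ⟨w0, Finset.mem_univ _, klterm_lt (hF0 _ _ _) (hG0 _ _ _) (hFG _ _ _) hw0⟩
  have conv : ∀ g : X → Y → Y → ℝ,
      (∑ w : X × Y × Y, g w.1 w.2.1 w.2.2) = ∑ x, ∑ y, ∑ z, g x y z := by
    intro g
    rw [Fintype.sum_prod_type]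
    exact Finset.sum_congr rfl fun x _ => Fintype.sum_prod_type _
  have h1 : ∑ x, ∑ y, ∑ z, (F x y z - G x y z)
      < ∑ x, ∑ y, ∑ z, F x y z * Real.log (F x y z / G x y z) := by
    rw [← conv (fun x y z => F x y z - G x y z),
      ← conv (fun x y z => F x y z * Real.log (F x y z / G x y z))]
    exact hsumlt
  have h2 : ∑ x, ∑ y, ∑ z, (F x y z - G x y z) = 0 := by
    simp only [Finset.sum_sub_distrib]
    rw [hFsum, hGsum]
    ring
  linarith [hdiff, h1, h2]
end

section
/- Let X_A, X_B, C be discrete random variables with full-support joint distribution, and let θ be a (possibly random) function of X_A independent of (X_A, X_B, C). Then the expected target payment under misreporting, E[ln P(X_B | C, θ(X_A)) − ln P(X_B | C)], equals the truthful payment I(X_B; X_A | C) minus E[KL(P(X_B | C, X_A) ‖ P(X_B | C, θ(X_A)))], and hence is at most I(X_B; X_A | C). -/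
variable {A A' B C : Type} [Fintype A] [Fintype A'] [Fintype B] [Fintype C]

/-- Marginal of `(X_A, C)`. -/
noncomputable def pAC (p : A × B × C → ℝ) (a : A) (c : C) : ℝ := ∑ b, p (a, b, c)

/-- Marginal of `(X_B, C)`. -/
noncomputable def pBC (p : A × B × C → ℝ) (b : B) (c : C) : ℝ := ∑ a, p (a, b, c)

/-- Marginal of `C`. -/
noncomputable def pC (p : A × B × C → ℝ) (c : C) : ℝ := ∑ a, ∑ b, p (a, b, c)

/-- Joint distribution of `(θ(X_A), X_B, C)` induced by the common prior `p` and the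
reporting channel `θ : A → A'` (randomness independent of `(X_A, X_B, C)`). -/
noncomputable def pushed (p : A × B × C → ℝ) (θ : A → A' → ℝ) (a' : A') (b : B) (c : C) : ℝ :=
  ∑ a, p (a, b, c) * θ a a'

/-- Marginal of `(θ(X_A), C)` under the induced joint distribution. -/
noncomputable def pushedAC (p : A × B × C → ℝ) (θ : A → A' → ℝ) (a' : A') (c : C) : ℝ :=
  ∑ b, pushed p θ a' b c

/-- Truthful expected target payment: `I(X_B; X_A | C)`. -/
noncomputable def truthfulPayment (p : A × B × C → ℝ) : ℝ :=
  ∑ a, ∑ b, ∑ c, p (a, b, c) *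
    Real.log ((p (a, b, c) / pAC p a c) / (pBC p b c / pC p c))

/-- Expected target payment when reporting through the channel `θ`:
`E[ln P(X_B | C, θ(X_A)) − ln P(X_B | C)]`, expectation over the joint distribution of
`(X_A, X_B, C)` and the channel. -/
noncomputable def misreportPayment (p : A × B × C → ℝ) (θ : A → A' → ℝ) : ℝ :=
  ∑ a, ∑ b, ∑ c, ∑ a', p (a, b, c) * θ a a' *
    (Real.log (pushed p θ a' b c / pushedAC p θ a' c) - Real.log (pBC p b c / pC p c))

/-- Expected KL divergence `E[KL(P(X_B|C,X_A) ‖ P(X_B|C,θ(X_A)))]`, expectation over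
`(C, X_A)` and the channel. -/
noncomputable def expectedKL (p : A × B × C → ℝ) (θ : A → A' → ℝ) : ℝ :=
  ∑ a, ∑ c, ∑ a', pAC p a c * θ a a' *
    ∑ b, (p (a, b, c) / pAC p a c) *
      Real.log ((p (a, b, c) / pAC p a c) / (pushed p θ a' b c / pushedAC p θ a' c))

private lemma kl_ge {ι : Type*} (s : Finset ι) (q r : ι → ℝ)
    (hq : ∀ i ∈ s, 0 < q i) (hr : ∀ i ∈ s, 0 < r i) :
    ∑ i ∈ s, (q i - r i) ≤ ∑ i ∈ s, q i * Real.log (q i / r i) := by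
  apply Finset.sum_le_sum
  intro i hi
  have hqi := hq i hi
  have hri := hr i hi
  have h := Real.log_le_sub_one_of_pos (show 0 < r i / q i by positivity)
  have hlog : Real.log (q i / r i) = - Real.log (r i / q i) := by
    rw [← Real.log_inv]
    congr 1
    field_simp
  rw [hlog]
  have h2 := mul_le_mul_of_nonneg_left h (le_of_lt hqi)
  have h3 : q i * (r i / q i - 1) = r i - q i := by field_simp
  nlinarith

/-- **Misreporting loses the expected KL divergence.**
For `X_A, X_B, C` with full-support joint distribution `p` on finite spaces and a
reporting channel `θ` (randomness independent of `(X_A, X_B, C)`), the expected target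
payment under misreporting equals the truthful payment `I(X_B; X_A | C)` minus
`E[KL(P(X_B|C,X_A) ‖ P(X_B|C,θ(X_A)))]`, and hence is at most `I(X_B; X_A | C)`. -/
theorem misreport_payment_eq_truthful_sub_KL
    (p : A × B × C → ℝ) (hpos : ∀ w, 0 < p w) (hsum : ∑ w, p w = 1)
    (θ : A → A' → ℝ) (hθ0 : ∀ a a', 0 ≤ θ a a') (hθ1 : ∀ a, ∑ a', θ a a' = 1) :
    misreportPayment p θ = truthfulPayment p - expectedKL p θ ∧
      misreportPayment p θ ≤ truthfulPayment p := by
  classical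
  -- nonemptiness
  have hne : Nonempty (A × B × C) := by
    by_contra h
    rw [not_nonempty_iff] at h
    rw [Finset.univ_eq_empty, Finset.sum_empty] at hsum
    norm_num at hsum
  obtain ⟨⟨a0, b0, c0⟩⟩ := hne
  have hA : Nonempty A := ⟨a0⟩
  have hB : Nonempty B := ⟨b0⟩
  have hC : Nonempty C := ⟨c0⟩
  -- positivity of marginals
  have hpAC : ∀ a c, 0 < pAC p a c := fun a c =>
    Finset.sum_pos (fun b _ => hpos _) Finset.univ_nonempty
  have hpBC : ∀ b c, 0 < pBC p b c := fun b c =>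
    Finset.sum_pos (fun a _ => hpos _) Finset.univ_nonempty
  have hpC : ∀ c, 0 < pC p c := fun c =>
    Finset.sum_pos (fun a _ => Finset.sum_pos (fun b _ => hpos _) Finset.univ_nonempty)
      Finset.univ_nonempty
  have hpushed_pos : ∀ a a' b c, 0 < θ a a' → 0 < pushed p θ a' b c := by
    intro a a' b c hθ
    refine Finset.sum_pos' (fun i _ => mul_nonneg (hpos _).le (hθ0 _ _)) ⟨a, Finset.mem_univ a, ?_⟩
    exact mul_pos (hpos _) hθ
  have hpushedAC_pos : ∀ a a' c, 0 < θ a a' → 0 < pushedAC p θ a' c := by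
    intro a a' c hθ
    exact Finset.sum_pos (fun b _ => hpushed_pos a a' b c hθ) Finset.univ_nonempty
  -- rewrite truthfulPayment with the channel summed in
  have eqT : truthfulPayment p = ∑ a, ∑ b, ∑ c, ∑ a', p (a, b, c) * θ a a' *
      Real.log ((p (a, b, c) / pAC p a c) / (pBC p b c / pC p c)) := by
    unfold truthfulPayment
    refine Finset.sum_congr rfl fun a _ => Finset.sum_congr rfl fun b _ =>
      Finset.sum_congr rfl fun c _ => ?_
    have : ∑ a', p (a, b, c) * θ a a' *
        Real.log ((p (a, b, c) / pAC p a c) / (pBC p b c / pC p c))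
        = (p (a, b, c) * Real.log ((p (a, b, c) / pAC p a c) / (pBC p b c / pC p c)))
          * ∑ a', θ a a' := by
      rw [Finset.mul_sum]
      exact Finset.sum_congr rfl fun a' _ => by ring
    rw [this, hθ1, mul_one]
  -- rewrite expectedKL with the pAC distributed and sums reordered
  have eqK : expectedKL p θ = ∑ a, ∑ b, ∑ c, ∑ a', p (a, b, c) * θ a a' *
      Real.log ((p (a, b, c) / pAC p a c) / (pushed p θ a' b c / pushedAC p θ a' c)) := by
    unfold expectedKL
    have step1 : ∀ a c a', pAC p a c * θ a a' *
        ∑ b, (p (a, b, c) / pAC p a c) *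
          Real.log ((p (a, b, c) / pAC p a c) / (pushed p θ a' b c / pushedAC p θ a' c))
        = ∑ b, p (a, b, c) * θ a a' *
          Real.log ((p (a, b, c) / pAC p a c) / (pushed p θ a' b c / pushedAC p θ a' c)) := by
      intro a c a'
      rw [Finset.mul_sum]
      refine Finset.sum_congr rfl fun b _ => ?_
      have h := (hpAC a c).ne'
      field_simp
    calc ∑ a, ∑ c, ∑ a', pAC p a c * θ a a' *
          ∑ b, (p (a, b, c) / pAC p a c) *
            Real.log ((p (a, b, c) / pAC p a c) / (pushed p θ a' b c / pushedAC p θ a' c))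
        = ∑ a, ∑ c, ∑ a', ∑ b, p (a, b, c) * θ a a' *
          Real.log ((p (a, b, c) / pAC p a c) / (pushed p θ a' b c / pushedAC p θ a' c)) := by
          exact Finset.sum_congr rfl fun a _ => Finset.sum_congr rfl fun c _ =>
            Finset.sum_congr rfl fun a' _ => step1 a c a'
      _ = _ := by
          refine Finset.sum_congr rfl fun a _ => ?_
          exact (Finset.sum_congr rfl fun c _ => Finset.sum_comm).trans Finset.sum_comm
  -- the main equality
  have hEq : misreportPayment p θ = truthfulPayment p - expectedKL p θ := by
    rw [eqT, eqK]
    unfold misreportPayment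
    rw [← Finset.sum_sub_distrib]
    refine Finset.sum_congr rfl fun a _ => ?_
    rw [← Finset.sum_sub_distrib]
    refine Finset.sum_congr rfl fun b _ => ?_
    rw [← Finset.sum_sub_distrib]
    refine Finset.sum_congr rfl fun c _ => ?_
    rw [← Finset.sum_sub_distrib]
    refine Finset.sum_congr rfl fun a' _ => ?_
    rcases eq_or_lt_of_le (hθ0 a a') with h0 | hθ
    · rw [show θ a a' = 0 from h0.symm]; ring
    · have h1 : p (a, b, c) ≠ 0 := (hpos _).ne'
      have h2 : pAC p a c ≠ 0 := (hpAC a c).ne'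
      have h3 : pBC p b c ≠ 0 := (hpBC b c).ne'
      have h4 : pC p c ≠ 0 := (hpC c).ne'
      have h5 : pushed p θ a' b c ≠ 0 := (hpushed_pos a a' b c hθ).ne'
      have h6 : pushedAC p θ a' c ≠ 0 := (hpushedAC_pos a a' c hθ).ne'
      rw [Real.log_div (div_ne_zero h1 h2) (div_ne_zero h3 h4),
        Real.log_div (div_ne_zero h1 h2) (div_ne_zero h5 h6),
        Real.log_div h1 h2, Real.log_div h3 h4, Real.log_div h5 h6]
      ring
  refine ⟨hEq, ?_⟩
  rw [hEq]
  have hKL : 0 ≤ expectedKL p θ := by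
    unfold expectedKL
    refine Finset.sum_nonneg fun a _ => Finset.sum_nonneg fun c _ =>
      Finset.sum_nonneg fun a' _ => ?_
    rcases eq_or_lt_of_le (hθ0 a a') with h0 | hθ
    · have hz0 : θ a a' = 0 := h0.symm
      rw [hz0]; simp
    · refine mul_nonneg (mul_nonneg (hpAC a c).le hθ.le) ?_
      have key := kl_ge (Finset.univ : Finset B)
        (fun b => p (a, b, c) / pAC p a c)
        (fun b => pushed p θ a' b c / pushedAC p θ a' c)
        (fun b _ => div_pos (hpos _) (hpAC a c))
        (fun b _ => div_pos (hpushed_pos a a' b c hθ) (hpushedAC_pos a a' c hθ))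
      have hz : ∑ b, (p (a, b, c) / pAC p a c - pushed p θ a' b c / pushedAC p θ a' c)
          = 0 := by
        rw [Finset.sum_sub_distrib, ← Finset.sum_div, ← Finset.sum_div]
        have e1 : (∑ b, p (a, b, c)) = pAC p a c := rfl
        have e2 : (∑ b, pushed p θ a' b c) = pushedAC p θ a' c := rfl
        rw [e1, e2, div_self (hpAC a c).ne', div_self (hpushedAC_pos a a' c hθ).ne']
        ring
      rw [hz] at key
      exact key
  linarith
end

section
/- Second-order stochastic relevance implies strict truthfulness gap: if for any distinct a, a' in the range of X_A there exists c with P(X_B | c, a) ≠ P(X_B | c, a'), and θ is a deterministic non-identity map on the support of X_A, then E[KL(P(X_B | C, X_A) ‖ P(X_B | C, θ(X_A)))] > 0, i.e., truthful reporting strictly outperforms the deviation θ. -/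
open Real Finset

private lemma term_ge {f g : ℝ} (hf : 0 < f) (hg : 0 < g) :
    f - g ≤ f * Real.log (f / g) := by
  have h := Real.log_le_sub_one_of_pos (show (0:ℝ) < g / f by positivity)
  have hlog : Real.log (f / g) = - Real.log (g / f) := by
    rw [Real.log_div hf.ne' hg.ne', Real.log_div hg.ne' hf.ne']; ring
  rw [hlog]
  have : g / f - 1 = (g - f) / f := by field_simp
  rw [this] at h
  have h2 : f * Real.log (g / f) ≤ g - f := by
    calc f * Real.log (g / f) ≤ f * ((g - f) / f) := by
          exact mul_le_mul_of_nonneg_left h hf.le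
      _ = g - f := by field_simp
  linarith

private lemma term_gt {f g : ℝ} (hf : 0 < f) (hg : 0 < g) (hne : f ≠ g) :
    f - g < f * Real.log (f / g) := by
  have hq : g / f ≠ 1 := by
    intro h; apply hne; field_simp at h; linarith
  have h := Real.log_lt_sub_one_of_pos (show (0:ℝ) < g / f by positivity) hq
  have hlog : Real.log (f / g) = - Real.log (g / f) := by
    rw [Real.log_div hf.ne' hg.ne', Real.log_div hg.ne' hf.ne']; ring
  rw [hlog]
  have : g / f - 1 = (g - f) / f := by field_simp
  rw [this] at h
  have h2 : f * Real.log (g / f) < g - f := by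
    calc f * Real.log (g / f) < f * ((g - f) / f) := by
          exact (mul_lt_mul_iff_right₀ hf).2 h
      _ = g - f := by field_simp
  linarith

private lemma gibbs_nonneg {B : Type} [Fintype B] (f g : B → ℝ)
    (hf : ∀ b, 0 < f b) (hg : ∀ b, 0 < g b)
    (hfs : ∑ b, f b = 1) (hgs : ∑ b, g b = 1) :
    0 ≤ ∑ b, f b * Real.log (f b / g b) := by
  have h : ∑ b, (f b - g b) ≤ ∑ b, f b * Real.log (f b / g b) :=
    Finset.sum_le_sum fun b _ => term_ge (hf b) (hg b)
  rw [Finset.sum_sub_distrib, hfs, hgs] at h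
  linarith

private lemma gibbs_pos {B : Type} [Fintype B] (f g : B → ℝ)
    (hf : ∀ b, 0 < f b) (hg : ∀ b, 0 < g b)
    (hfs : ∑ b, f b = 1) (hgs : ∑ b, g b = 1) (hne : f ≠ g) :
    0 < ∑ b, f b * Real.log (f b / g b) := by
  obtain ⟨b0, hb0⟩ := Function.ne_iff.1 hne
  have h : ∑ b, (f b - g b) < ∑ b, f b * Real.log (f b / g b) :=
    Finset.sum_lt_sum (fun b _ => term_ge (hf b) (hg b))
      ⟨b0, Finset.mem_univ b0, term_gt (hf b0) (hg b0) hb0⟩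
  rw [Finset.sum_sub_distrib, hfs, hgs] at h
  linarith

/-- **Second-order stochastic relevance implies a strict truthfulness gap.**
Let `X_A, X_B, C` have a full-support joint distribution `p` on finite spaces.
Suppose second-order stochastic relevance holds: for any distinct `a ≠ a'` in the
range of `X_A` there exists `c` with `P(X_B | c, a) ≠ P(X_B | c, a')`.  Then for any
deterministic non-identity map `θ` on the (full) support of `X_A`, the expected
KL divergence `E[KL(P(X_B | C, X_A) ‖ P(X_B | C, θ(X_A)))]` (expectation over
`(C, X_A)`) is strictly positive, i.e. truthful reporting strictly outperforms the
deviation `θ`. -/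
theorem stochastic_relevance_strict_truthfulness_gap
    (A B C : Type) [Fintype A] [Fintype B] [Fintype C]
    (p : A × B × C → ℝ) (hpos : ∀ w, 0 < p w) (hsum : ∑ w, p w = 1)
    (hrel : ∀ a a' : A, a ≠ a' → ∃ c : C,
      (fun b => p (a, b, c) / ∑ b', p (a, b', c)) ≠
        (fun b => p (a', b, c) / ∑ b', p (a', b', c)))
    (θ : A → A) (hθ : ∃ a, θ a ≠ a) :
    0 < ∑ a, ∑ c, (∑ b, p (a, b, c)) *
        ∑ b, (p (a, b, c) / ∑ b', p (a, b', c)) *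
          Real.log ((p (a, b, c) / ∑ b', p (a, b', c)) /
            (p (θ a, b, c) / ∑ b', p (θ a, b', c))) := by
  obtain ⟨a0, ha0⟩ := hθ
  obtain ⟨c0, hc0⟩ := hrel a0 (θ a0) (Ne.symm ha0)
  cases isEmpty_or_nonempty B with
  | inl hB =>
      exact absurd (funext fun b => hB.elim b) hc0
  | inr hB =>
      have hS : ∀ (a : A) (c : C), 0 < ∑ b, p (a, b, c) :=
        fun a c => Finset.sum_pos (fun b _ => hpos _) univ_nonempty
      have hcond_pos : ∀ (a a' : A) (c : C) (b : B),
          0 < p (a, b, c) / ∑ b', p (a', b', c) :=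
        fun a a' c b => div_pos (hpos _) (hS a' c)
      have hcond_sum : ∀ (a : A) (c : C),
          ∑ b, p (a, b, c) / ∑ b', p (a, b', c) = 1 := by
        intro a c
        rw [← Finset.sum_div]
        exact div_self (hS a c).ne'
      -- each inner KL term is nonneg
      have hterm_nonneg : ∀ (a : A) (c : C),
          0 ≤ (∑ b, p (a, b, c)) *
            ∑ b, (p (a, b, c) / ∑ b', p (a, b', c)) *
              Real.log ((p (a, b, c) / ∑ b', p (a, b', c)) /
                (p (θ a, b, c) / ∑ b', p (θ a, b', c))) := by
        intro a c
        refine mul_nonneg (hS a c).le ?_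
        exact gibbs_nonneg _ _ (fun b => hcond_pos a a c b)
          (fun b => hcond_pos (θ a) (θ a) c b) (hcond_sum a c) (hcond_sum (θ a) c)
      have hterm_pos :
          0 < (∑ b, p (a0, b, c0)) *
            ∑ b, (p (a0, b, c0) / ∑ b', p (a0, b', c0)) *
              Real.log ((p (a0, b, c0) / ∑ b', p (a0, b', c0)) /
                (p (θ a0, b, c0) / ∑ b', p (θ a0, b', c0))) := by
        refine mul_pos (hS a0 c0) ?_
        exact gibbs_pos _ _ (fun b => hcond_pos a0 a0 c0 b)
          (fun b => hcond_pos (θ a0) (θ a0) c0 b) (hcond_sum a0 c0)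
          (hcond_sum (θ a0) c0) hc0
      refine Finset.sum_pos' (fun a _ => Finset.sum_nonneg fun c _ => hterm_nonneg a c)
        ⟨a0, Finset.mem_univ a0, ?_⟩
      exact Finset.sum_pos' (fun c _ => hterm_nonneg a0 c)
        ⟨c0, Finset.mem_univ c0, hterm_pos⟩
end

section
/- If I(X_B; (X_A^{rest}) | X_A, W) = 0 (conditional independence of the remaining signals given X_A and W) and I(X_B; X_A^{rest} | X_A^{part}, W) > 0 for the deviation channel, then I(X_B; g(X_A^{part}) | W) < I(X_B; X_A | W) for any deterministic best-guess function g of the partial signals X_A^{part}, where X_A^{part} is a deterministic function of (X_A, X_A^{rest}). -/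
open Finset in
lemma logsum {ι : Type*} (s : Finset ι) (a c : ι → ℝ)
    (ha : ∀ i ∈ s, 0 ≤ a i) (hc : ∀ i ∈ s, 0 ≤ c i)
    (hac : ∀ i ∈ s, 0 < a i → 0 < c i) :
    (∑ i ∈ s, a i) * Real.log ((∑ i ∈ s, a i) / (∑ i ∈ s, c i)) ≤
      ∑ i ∈ s, a i * Real.log (a i / c i) := by
  rcases eq_or_lt_of_le (Finset.sum_nonneg ha) with hA | hA
  · have h0 : ∀ i ∈ s, a i = 0 := (Finset.sum_eq_zero_iff_of_nonneg ha).mp hA.symm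
    rw [← hA, zero_mul]
    exact le_of_eq (Finset.sum_eq_zero fun i hi => by rw [h0 i hi, zero_mul]).symm
  · have hex : ∃ i ∈ s, 0 < a i := by
      by_contra h
      push_neg at h
      have : ∑ i ∈ s, a i = 0 :=
        Finset.sum_eq_zero fun i hi => le_antisymm (h i hi) (ha i hi)
      linarith
    obtain ⟨i0, hi0, hai0⟩ := hex
    have hC : 0 < ∑ i ∈ s, c i :=
      Finset.sum_pos' hc ⟨i0, hi0, hac i0 hi0 hai0⟩
    set A := ∑ i ∈ s, a i with hAdef
    set C := ∑ i ∈ s, c i with hCdef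
    have key : ∀ i ∈ s, a i * Real.log (A / C) + (a i - A * c i / C) ≤
        a i * Real.log (a i / c i) := by
      intro i hi
      rcases eq_or_lt_of_le (ha i hi) with hai | hai
      · rw [← hai]
        have : 0 ≤ A * c i / C := div_nonneg (mul_nonneg hA.le (hc i hi)) hC.le
        simp only [zero_mul, zero_sub, zero_add]
        nlinarith [hc i hi]
      · have hci := hac i hi hai
        have harg : (0:ℝ) < A * c i / (C * a i) := by positivity
        have hlog := Real.log_le_sub_one_of_pos harg
        have h1 : Real.log (A / C) - Real.log (a i / c i) =
            Real.log (A * c i / (C * a i)) := by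
          rw [← Real.log_div (by positivity) (by positivity)]
          congr 1
          field_simp
        have h3 : a i * (A * c i / (C * a i)) = A * c i / C := by
          field_simp
        nlinarith [mul_le_mul_of_nonneg_left hlog (le_of_lt hai)]
    calc A * Real.log (A / C)
        = ∑ i ∈ s, (a i * Real.log (A / C) + (a i - A * c i / C)) := by
          rw [Finset.sum_add_distrib, Finset.sum_sub_distrib, ← Finset.sum_mul]
          rw [← hAdef]
          have : ∑ i ∈ s, A * c i / C = A := by
            rw [← Finset.sum_div, ← Finset.mul_sum, ← hCdef, mul_div_assoc,
              div_self (ne_of_gt hC), mul_one]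
          rw [this]
          ring
      _ ≤ ∑ i ∈ s, a i * Real.log (a i / c i) := Finset.sum_le_sum key

/-- Conditional Shannon mutual information `I(U;V|W)` of a joint distribution `q`
on `U × V × W` (conditioning on the third coordinate). -/
noncomputable def cmi {U V W : Type} [Fintype U] [Fintype V] [Fintype W]
    (q : U × V × W → ℝ) : ℝ :=
  ∑ u, ∑ v, ∑ w, q (u, v, w) *
    Real.log (q (u, v, w) * (∑ u', ∑ v', q (u', v', w)) /
      ((∑ v', q (u, v', w)) * (∑ u', q (u', v, w))))

open Finset in
lemma chain_term (qv q1 N K Mbw Mw : ℝ) (h0 : 0 ≤ qv) (h1 : qv ≤ q1)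
    (hN : qv ≤ N) (hK : q1 ≤ K) (hMbw : q1 ≤ Mbw) (hMw : Mbw ≤ Mw) :
    qv * Real.log (qv * Mw / (Mbw * N)) =
      qv * Real.log (q1 * Mw / (Mbw * K)) + qv * Real.log (qv * K / (q1 * N)) := by
  rcases h0.eq_or_lt with h | h
  · simp [← h]
  · have hq1 : 0 < q1 := lt_of_lt_of_le h h1
    have hN' : 0 < N := lt_of_lt_of_le h hN
    have hK' : 0 < K := lt_of_lt_of_le hq1 hK
    have hMbw' : 0 < Mbw := lt_of_lt_of_le hq1 hMbw
    have hMw' : 0 < Mw := lt_of_lt_of_le hMbw' hMw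
    rw [← mul_add, ← Real.log_mul (by positivity) (by positivity)]
    congr 2
    field_simp

open Finset in
lemma cmi_chain {B V1 V2 W : Type} [Fintype B] [Fintype V1] [Fintype V2] [Fintype W]
    (q : B × (V1 × V2) × W → ℝ) (hq : ∀ t, 0 ≤ q t) :
    cmi q = cmi (fun t : B × V1 × W => ∑ v2, q (t.1, (t.2.1, v2), t.2.2))
          + cmi (fun t : B × V2 × (V1 × W) => q (t.1, (t.2.2.1, t.2.1), t.2.2.2)) := by
  have e0 : cmi q = ∑ b, ∑ v1, ∑ v2, ∑ w, q (b, (v1, v2), w) *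
      Real.log (q (b, (v1, v2), w) * (∑ b', ∑ v1', ∑ v2', q (b', (v1', v2'), w)) /
        ((∑ v1', ∑ v2', q (b, (v1', v2'), w)) * (∑ b', q (b', (v1, v2), w)))) := by
    simp only [cmi, Fintype.sum_prod_type]
  have e1 : cmi (fun t : B × V1 × W => ∑ v2, q (t.1, (t.2.1, v2), t.2.2)) =
      ∑ b, ∑ v1, ∑ v2, ∑ w, q (b, (v1, v2), w) *
        Real.log ((∑ v2', q (b, (v1, v2'), w)) *
            (∑ b', ∑ v1', ∑ v2', q (b', (v1', v2'), w)) /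
          ((∑ v1', ∑ v2', q (b, (v1', v2'), w)) *
            (∑ b', ∑ v2', q (b', (v1, v2'), w)))) := by
    simp only [cmi]
    refine Finset.sum_congr rfl fun b _ => Finset.sum_congr rfl fun v1 _ => ?_
    rw [Finset.sum_comm]
    refine Finset.sum_congr rfl fun w _ => ?_
    rw [Finset.sum_mul]
  have e2 : cmi (fun t : B × V2 × (V1 × W) => q (t.1, (t.2.2.1, t.2.1), t.2.2.2)) =
      ∑ b, ∑ v1, ∑ v2, ∑ w, q (b, (v1, v2), w) *
        Real.log (q (b, (v1, v2), w) * (∑ b', ∑ v2', q (b', (v1, v2'), w)) /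
          ((∑ v2', q (b, (v1, v2'), w)) * (∑ b', q (b', (v1, v2), w)))) := by
    simp only [cmi, Fintype.sum_prod_type]
    refine Finset.sum_congr rfl fun b _ => Finset.sum_comm
  rw [e0, e1, e2, ← Finset.sum_add_distrib]
  refine Finset.sum_congr rfl fun b _ => ?_
  rw [← Finset.sum_add_distrib]
  refine Finset.sum_congr rfl fun v1 _ => ?_
  rw [← Finset.sum_add_distrib]
  refine Finset.sum_congr rfl fun v2 _ => ?_
  rw [← Finset.sum_add_distrib]
  refine Finset.sum_congr rfl fun w _ => ?_
  refine chain_term _ _ _ _ _ _ (hq _) ?_ ?_ ?_ ?_ ?_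
  · exact Finset.single_le_sum (f := fun v2' => q (b, (v1, v2'), w))
      (fun i _ => hq _) (mem_univ v2)
  · exact Finset.single_le_sum (f := fun b' => q (b', (v1, v2), w))
      (fun i _ => hq _) (mem_univ b)
  · exact Finset.single_le_sum (f := fun b' => ∑ v2', q (b', (v1, v2'), w))
      (fun i _ => Finset.sum_nonneg fun _ _ => hq _) (mem_univ b)
  · exact Finset.single_le_sum (f := fun v1' => ∑ v2', q (b, (v1', v2'), w))
      (fun i _ => Finset.sum_nonneg fun _ _ => hq _) (mem_univ v1)
  · exact Finset.single_le_sum (f := fun b' => ∑ v1', ∑ v2', q (b', (v1', v2'), w))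
      (fun i _ => Finset.sum_nonneg fun _ _ => Finset.sum_nonneg fun _ _ => hq _)
      (mem_univ b)

open Finset in
lemma arith1 (x y z m : ℝ) : x / (z * y / m) = x * m / (y * z) := by
  rw [div_div_eq_mul_div, mul_comm z y]

open Finset in
lemma cmi_dpi {B V V' W : Type} [Fintype B] [Fintype V] [Fintype V'] [Fintype W]
    [DecidableEq V'] (q : B × V × W → ℝ) (hq : ∀ t, 0 ≤ q t) (f : V → V')
    (q' : B × V' × W → ℝ)
    (hq' : ∀ b v' w, q' (b, v', w) = ∑ v, if f v = v' then q (b, v, w) else 0) :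
    cmi q' ≤ cmi q := by
  have hq'' : q' = fun t : B × V' × W => ∑ v, if f v = t.2.1 then q (t.1, v, t.2.2) else 0 := by
    funext t
    obtain ⟨b, v', w⟩ := t
    exact hq' b v' w
  rw [hq'']
  have collapse : ∀ (h : V → ℝ), (∑ v', ∑ v, if f v = v' then h v else 0) = ∑ v, h v := by
    intro h
    rw [Finset.sum_comm]
    simp [Finset.sum_ite_eq]
  have e1 : cmi (fun t : B × V' × W => ∑ v, if f v = t.2.1 then q (t.1, v, t.2.2) else 0)
      = ∑ b, ∑ v', ∑ w, (∑ v, if f v = v' then q (b, v, w) else 0) *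
          Real.log ((∑ v, if f v = v' then q (b, v, w) else 0) *
              (∑ b', ∑ v, q (b', v, w)) /
            ((∑ v, q (b, v, w)) * (∑ b', ∑ v, if f v = v' then q (b', v, w) else 0))) := by
    simp only [cmi, collapse]
  have e2 : cmi q = ∑ b, ∑ v', ∑ w, ∑ v, if f v = v' then
      q (b, v, w) * Real.log (q (b, v, w) * (∑ b', ∑ v'', q (b', v'', w)) /
        ((∑ v'', q (b, v'', w)) * (∑ b', q (b', v, w)))) else 0 := by
    simp only [cmi]
    refine Finset.sum_congr rfl fun b _ => ?_
    calc (∑ v, ∑ w, q (b, v, w) * Real.log (q (b, v, w) * (∑ b', ∑ v'', q (b', v'', w)) /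
            ((∑ v'', q (b, v'', w)) * (∑ b', q (b', v, w)))))
        = ∑ w, ∑ v, q (b, v, w) * Real.log (q (b, v, w) * (∑ b', ∑ v'', q (b', v'', w)) /
            ((∑ v'', q (b, v'', w)) * (∑ b', q (b', v, w)))) := Finset.sum_comm
      _ = ∑ w, ∑ v', ∑ v, if f v = v' then
            q (b, v, w) * Real.log (q (b, v, w) * (∑ b', ∑ v'', q (b', v'', w)) /
              ((∑ v'', q (b, v'', w)) * (∑ b', q (b', v, w)))) else 0 :=
          Finset.sum_congr rfl fun w _ => (collapse _).symm
      _ = ∑ v', ∑ w, ∑ v, if f v = v' then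
            q (b, v, w) * Real.log (q (b, v, w) * (∑ b', ∑ v'', q (b', v'', w)) /
              ((∑ v'', q (b, v'', w)) * (∑ b', q (b', v, w)))) else 0 := Finset.sum_comm
  rw [e1, e2]
  refine Finset.sum_le_sum fun b _ => Finset.sum_le_sum fun v' _ =>
    Finset.sum_le_sum fun w _ => ?_
  -- per-group inequality via logsum
  set Mw := ∑ b', ∑ v'', q (b', v'', w) with hMw
  set Mbw := ∑ v'', q (b, v'', w) with hMbw
  set a : V → ℝ := fun v => if f v = v' then q (b, v, w) else 0 with hadef
  set c : V → ℝ := fun v => if f v = v' then (∑ b', q (b', v, w)) * Mbw / Mw else 0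
    with hcdef
  have ha : ∀ v ∈ Finset.univ, 0 ≤ a v := fun v _ => by
    simp only [hadef]; split
    · exact hq _
    · exact le_refl 0
  have hMbw0 : (0:ℝ) ≤ Mbw := Finset.sum_nonneg fun _ _ => hq _
  have hMw0 : (0:ℝ) ≤ Mw := Finset.sum_nonneg fun _ _ => Finset.sum_nonneg fun _ _ => hq _
  have hc : ∀ v ∈ Finset.univ, 0 ≤ c v := fun v _ => by
    simp only [hcdef]; split
    · exact div_nonneg (mul_nonneg (Finset.sum_nonneg fun _ _ => hq _) hMbw0) hMw0
    · exact le_refl 0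
  have hac : ∀ v ∈ Finset.univ, 0 < a v → 0 < c v := by
    intro v _ hav
    have h : f v = v' := by
      by_contra hh
      simp only [hadef, if_neg hh] at hav
      exact lt_irrefl 0 hav
    have hqv : 0 < q (b, v, w) := by simpa [hadef, if_pos h] using hav
    have hNv : 0 < ∑ b', q (b', v, w) :=
      lt_of_lt_of_le hqv (Finset.single_le_sum (f := fun b' => q (b', v, w))
        (fun _ _ => hq _) (mem_univ b))
    have hMbw1 : 0 < Mbw :=
      lt_of_lt_of_le hqv (Finset.single_le_sum (f := fun v'' => q (b, v'', w))
        (fun _ _ => hq _) (mem_univ v))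
    have hMw1 : 0 < Mw :=
      lt_of_lt_of_le hMbw1 (Finset.single_le_sum (f := fun b' => ∑ v'', q (b', v'', w))
        (fun _ _ => Finset.sum_nonneg fun _ _ => hq _) (mem_univ b))
    simp only [hcdef, if_pos h]
    positivity
  have hN' : (∑ b', ∑ v, if f v = v' then q (b', v, w) else 0)
      = ∑ v, if f v = v' then (∑ b', q (b', v, w)) else 0 := by
    rw [Finset.sum_comm]
    refine Finset.sum_congr rfl fun v _ => ?_
    by_cases h : f v = v' <;> simp [h]
  have hsc : Finset.univ.sum c
      = (∑ b', ∑ v, if f v = v' then q (b', v, w) else 0) * Mbw / Mw := by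
    rw [hN']
    have : ∀ v : V, c v = (if f v = v' then (∑ b', q (b', v, w)) else 0) * Mbw / Mw := by
      intro v; simp only [hcdef]; split <;> simp
    simp only [this]
    rw [← Finset.sum_div, ← Finset.sum_mul]
  have hls := logsum Finset.univ a c ha hc hac
  have harg : Finset.univ.sum a * Mw /
      (Mbw * ∑ b', ∑ v, if f v = v' then q (b', v, w) else 0)
      = Finset.univ.sum a / Finset.univ.sum c := by
    rw [hsc, arith1]
  rw [harg]
  refine le_trans hls (le_of_eq (Finset.sum_congr rfl fun v _ => ?_))
  by_cases h : f v = v'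
  · simp only [hadef, hcdef, if_pos h]
    rw [arith1]
  · simp only [hadef, hcdef, if_neg h]
    simp

/-- **Strict positivity of the marginal target payment.**
Let `X_B` (target's signal), `X_A` (reviewer A's effort-informed signal on the top
criterion), `X_R = X_A^{rest}` (A's other signals) and `W` (conditioning information)
be discrete random variables with full-support joint distribution `p`, and let
`X_A^{part} = φ(X_A, X_A^{rest})` be a deterministic function of `(X_A, X_A^{rest})`
(A's signals on lower criteria).  If
`I(X_B; X_A^{rest} | X_A, W) = 0` (conditional independence of the remaining signals
given `X_A` and `W`) and `I(X_B; X_A^{rest} | X_A^{part}, W) > 0`, then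
`I(X_B; g(X_A^{part}) | W) < I(X_B; X_A | W)` for any deterministic best-guess
function `g` of the partial signals. -/
theorem marginal_target_payment_strictly_positive
    (B A R Pt W : Type)
    [Fintype B] [Fintype A] [Fintype R] [Fintype Pt] [Fintype W] [DecidableEq Pt]
    (p : B × A × R × W → ℝ) (hpos : ∀ t, 0 < p t) (hsum : ∑ t, p t = 1)
    (φ : A × R → Pt) (g : Pt → Pt)
    (hCI : cmi (fun t : B × R × (A × W) => p (t.1, t.2.2.1, t.2.1, t.2.2.2)) = 0)
    (hpos' : 0 < cmi (fun t : B × R × (Pt × W) =>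
        ∑ a, if φ (a, t.2.1) = t.2.2.1 then p (t.1, a, t.2.1, t.2.2.2) else 0)) :
    cmi (fun t : B × Pt × W =>
        ∑ a, ∑ r, if g (φ (a, r)) = t.2.1 then p (t.1, a, r, t.2.2) else 0) <
      cmi (fun t : B × A × W => ∑ r, p (t.1, t.2.1, r, t.2.2)) := by
  classical
  -- Step 1: chain rule on the full distribution (A,R)
  have h1 : cmi (fun t : B × (A × R) × W => p (t.1, t.2.1.1, t.2.1.2, t.2.2)) =
      cmi (fun t : B × A × W => ∑ r, p (t.1, t.2.1, r, t.2.2)) +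
      cmi (fun t : B × R × (A × W) => p (t.1, t.2.2.1, t.2.1, t.2.2.2)) :=
    cmi_chain _ (fun t => (hpos _).le)
  -- Step 2: DPI for (a,r) ↦ (φ(a,r), r)
  have h2 : cmi (fun t : B × (Pt × R) × W =>
        ∑ a, if φ (a, t.2.1.2) = t.2.1.1 then p (t.1, a, t.2.1.2, t.2.2) else 0) ≤
      cmi (fun t : B × (A × R) × W => p (t.1, t.2.1.1, t.2.1.2, t.2.2)) := by
    refine cmi_dpi _ (fun t => (hpos _).le) (fun ar => (φ ar, ar.2)) _ ?_
    rintro b ⟨pt, r0⟩ w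
    simp only
    rw [Fintype.sum_prod_type]
    refine (Finset.sum_congr rfl fun a _ => ?_).symm
    rw [Finset.sum_eq_single r0]
    · simp [Prod.ext_iff]
    · intro r _ hr
      exact if_neg (by simp [Prod.ext_iff, hr])
    · intro h
      exact absurd (Finset.mem_univ r0) h
  -- Step 3: chain rule on the (Pt, R) distribution
  have h3 : cmi (fun t : B × (Pt × R) × W =>
      ∑ a, if φ (a, t.2.1.2) = t.2.1.1 then p (t.1, a, t.2.1.2, t.2.2) else 0) =
      cmi (fun t : B × Pt × W =>
        ∑ r, ∑ a, if φ (a, r) = t.2.1 then p (t.1, a, r, t.2.2) else 0) +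
      cmi (fun t : B × R × (Pt × W) =>
        ∑ a, if φ (a, t.2.1) = t.2.2.1 then p (t.1, a, t.2.1, t.2.2.2) else 0) :=
    cmi_chain _ (fun t => Finset.sum_nonneg fun _ _ => by
      split
      · exact (hpos _).le
      · exact le_refl 0)
  -- Step 4: DPI for g
  have h4 : cmi (fun t : B × Pt × W =>
        ∑ a, ∑ r, if g (φ (a, r)) = t.2.1 then p (t.1, a, r, t.2.2) else 0) ≤
      cmi (fun t : B × Pt × W =>
        ∑ r, ∑ a, if φ (a, r) = t.2.1 then p (t.1, a, r, t.2.2) else 0) := by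
    refine cmi_dpi _ (fun t => Finset.sum_nonneg fun _ _ => Finset.sum_nonneg fun _ _ => by
      split
      · exact (hpos _).le
      · exact le_refl 0) g _ ?_
    intro b x w
    show (∑ a, ∑ r, if g (φ (a, r)) = x then p (b, a, r, w) else 0) =
      ∑ pt, if g pt = x then
        (∑ r, ∑ a, if φ (a, r) = pt then p (b, a, r, w) else 0) else 0
    calc (∑ a, ∑ r, if g (φ (a, r)) = x then p (b, a, r, w) else 0)
        = ∑ a, ∑ r, ∑ pt, if φ (a, r) = pt then
            (if g pt = x then p (b, a, r, w) else 0) else 0 := by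
          refine Finset.sum_congr rfl fun a _ => Finset.sum_congr rfl fun r _ => ?_
          rw [Finset.sum_ite_eq]
          simp
      _ = ∑ pt, ∑ a, ∑ r, if φ (a, r) = pt then
            (if g pt = x then p (b, a, r, w) else 0) else 0 :=
          Eq.trans (Finset.sum_congr rfl fun a _ => Finset.sum_comm) Finset.sum_comm
      _ = ∑ pt, if g pt = x then
            (∑ r, ∑ a, if φ (a, r) = pt then p (b, a, r, w) else 0) else 0 := by
          refine Finset.sum_congr rfl fun pt _ => ?_
          by_cases h : g pt = x
          · simp only [if_pos h]
            exact Finset.sum_comm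
          · simp [if_neg h]
  linarith [h1, h2, h3, h4, hCI, hpos']
end
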